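/- Let L ⊴ G and φ ∈ Irr(L) be invariant in G. If h ∈ G and χ is a ℂ-linear combination of characters in Irr(G | φ) with χ(h) ≠ 0, then h is φ-good, i.e. ⟨c, h⟩_φ = 1 for every c ∈ G with [c,h] ∈ L and Lc ∈ C_{G/L}(Lh). -/

import Mathlib

open MonoidAlgebra Finset
open scoped Classical

noncomputable section

namespace CF

variable {G : Type} [Group G] [Fintype G]

/-- A group element viewed in the complex group algebra. -/
def ι (g : G) : MonoidAlgebra ℂ G := MonoidAlgebra.single g 1

/-- The central idempotent of `ℂL` attached to an (irreducible) character `φ` of the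
subgroup `L`, viewed inside the group algebra `ℂG`. -/
def eIdem (L : Subgroup G) (φ : ↥L → ℂ) : MonoidAlgebra ℂ G :=
  (φ 1 / (Fintype.card L : ℂ)) • ∑ l : L, MonoidAlgebra.single (l : G) (φ l⁻¹)

/-- `a` is supported on the subgroup `L`. -/
def SuppIn (L : Subgroup G) (a : MonoidAlgebra ℂ G) : Prop := ∀ g : G, g ∉ L → a.coeff g = 0

/-- `a` lies in the corner `e_φ ℂG e_φ` determined by the idempotent `e_φ`. -/
def InCorner (L : Subgroup G) (φ : ↥L → ℂ) (a : MonoidAlgebra ℂ G) : Prop :=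
  a * eIdem L φ = a ∧ eIdem L φ * a = a

/-- `c` is a unit of `ℂ L e_φ` (with inverse `c'`) inducing on `ℂ L e_φ` the
conjugation action of the element `x`. -/
def Induces (L : Subgroup G) (φ : ↥L → ℂ) (x : G) (c c' : MonoidAlgebra ℂ G) : Prop :=
  SuppIn L c ∧ SuppIn L c' ∧ InCorner L φ c ∧ InCorner L φ c' ∧
  c * c' = eIdem L φ ∧ c' * c = eIdem L φ ∧
  ∀ a, SuppIn L a → InCorner L φ a → ι x⁻¹ * a * ι x = c' * a * c

/-- The Isaacs–Dade scalar `⟨x,y⟩_φ = z`, defined by `⟨x,y⟩_φ e_φ = [x,y][c_y,c_x]`. -/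
def DadeScalar (L : Subgroup G) (φ : ↥L → ℂ) (x y : G) (z : ℂ) : Prop :=
  ∃ cx cx' cy cy', Induces L φ x cx cx' ∧ Induces L φ y cy cy' ∧
    ι (x⁻¹ * y⁻¹ * x * y) * (cy' * cx' * cy * cx) = z • eIdem L φ

/-- `χ` is the character of an irreducible complex representation of `H`. -/
def IsIrrChar (H : Type) [Group H] (χ : H → ℂ) : Prop :=
  ∃ V : FDRep ℂ H, CategoryTheory.Simple V ∧ χ = V.character

/-- The usual inner product of complex-valued class functions on a finite group. -/
def innerChar (H : Type) [Group H] [Fintype H] (α β : H → ℂ) : ℂ :=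
  (Fintype.card H : ℂ)⁻¹ * ∑ h : H, α h * (starRingEnd ℂ) (β h)

/-- `φ ∈ Irr L` is invariant under conjugation by all elements of `G`. -/
def Invariant (L : Subgroup G) [hN : L.Normal] (φ : ↥L → ℂ) : Prop :=
  ∀ (g : G) (l : ↥L), φ ⟨g⁻¹ * l * g, by simpa [mul_assoc] using hN.conj_mem l l.2 g⁻¹⟩ = φ l

end CF

section Aux

open CategoryTheory Module Polynomial

/-- Schur's lemma: an endomorphism commuting with a simple representation is scalar. -/
lemma schurScalar {H : Type} [Group H] (V : FDRep ℂ H) (hVs : CategoryTheory.Simple V)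
    (T : V →ₗ[ℂ] V) (hT : ∀ g : H, T ∘ₗ V.ρ g = V.ρ g ∘ₗ T) :
    ∃ μ : ℂ, T = μ • LinearMap.id := by
  obtain ⟨θ, hθ⟩ : ∃ θ : V ⟶ V, θ.hom.hom.hom = T := by
    refine ⟨⟨FGModuleCat.ofHom T, ?_⟩, rfl⟩
    intro g; ext v
    exact congrFun (congrArg (fun f => f.toFun) (hT g)) v
  obtain ⟨μ, hμ⟩ := CategoryTheory.endomorphism_simple_eq_smul_id (𝕜 := ℂ) θ
  refine ⟨μ, ?_⟩
  have h2 : θ.hom.hom.hom = (μ • 𝟙 V).hom.hom.hom := by rw [hμ]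
  rw [hθ] at h2
  rw [h2]
  rfl

set_option maxHeartbeats 2000000 in
/-- If `f ^ n = 1` then the trace of `f ^ (n-1)` is the conjugate of the trace of `f`. -/
lemma traceConjAux {V : Type} [AddCommGroup V] [Module ℂ V] [FiniteDimensional ℂ V]
    (f : Module.End ℂ V) (n : ℕ) (hn : 0 < n) (hf : f ^ n = 1) :
    LinearMap.trace ℂ V (f ^ (n-1)) = starRingEnd ℂ (LinearMap.trace ℂ V f) := by
  classical
  have hsq : Squarefree ((X : ℂ[X]) ^ n - C 1) :=
    (Polynomial.separable_X_pow_sub_C (1:ℂ) (Nat.cast_ne_zero.mpr hn.ne') one_ne_zero).squarefree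
  have hss : f.IsSemisimple := by
    apply Module.End.isSemisimple_of_squarefree_aeval_eq_zero hsq
    simp [hf, sub_eq_zero]
  have htop : ⨆ μ : ℂ, f.eigenspace μ = ⊤ := by
    have h1 := Module.End.iSup_maxGenEigenspace_eq_top f
    have h2 := fun μ : ℂ => hss.isFinitelySemisimple.maxGenEigenspace_eq_eigenspace μ
    simpa only [h2] using h1
  have hroot : ∀ μ : ℂ, f.eigenspace μ ≠ ⊥ → μ ^ n = 1 := by
    intro μ hμ
    obtain ⟨v, hv, hv0⟩ := Submodule.exists_mem_ne_zero_of_ne_bot hμ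
    have hpow : (f ^ n) v = μ ^ n • v :=
      Module.End.HasEigenvector.pow_apply ⟨hv, hv0⟩ n
    rw [hf] at hpow
    have h0 : (μ ^ n - 1) • v = 0 := by
      rw [sub_smul, one_smul, ← hpow]; simp
    rcases smul_eq_zero.mp h0 with h | h
    · exact sub_eq_zero.mp h
    · exact absurd h hv0
  set S := Polynomial.nthRootsFinset n (1 : ℂ) with hSdef
  have hS : ∀ μ : ℂ, μ ∉ S → f.eigenspace μ = ⊥ := by
    intro μ hμ
    by_contra hb
    exact hμ ((Polynomial.mem_nthRootsFinset hn (1 : ℂ)).mpr (hroot μ hb))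
  have hind : iSupIndep (fun μ : S => f.eigenspace μ.1) :=
    f.eigenspaces_iSupIndep.comp Subtype.val_injective
  have h2le : (⨆ μ : ℂ, f.eigenspace μ) ≤ ⨆ μ : S, f.eigenspace μ.1 := by
    refine iSup_le fun μ => ?_
    by_cases h : μ ∈ S
    · exact le_iSup_of_le (⟨μ, h⟩ : S) le_rfl
    · rw [hS μ h]; exact bot_le
  have htopS : ⨆ μ : S, f.eigenspace μ.1 = ⊤ :=
    le_antisymm le_top (htop ▸ h2le)
  have hint : DirectSum.IsInternal (fun μ : S => f.eigenspace μ.1) :=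
    DirectSum.isInternal_submodule_of_iSupIndep_of_iSup_eq_top hind htopS
  let bB : ∀ μ : S, Basis (Module.Free.ChooseBasisIndex ℂ (f.eigenspace μ.1)) ℂ
      (f.eigenspace μ.1) := fun μ => Module.Free.chooseBasis ℂ _
  let b := hint.collectedBasis bB
  have hb : ∀ i, f (b i) = (i.1.1 : ℂ) • b i := fun i =>
    Module.End.mem_eigenspace_iff.mp (hint.collectedBasis_mem bB i)
  have hbpow : ∀ i, (f ^ (n-1)) (b i) = ((i.1.1 : ℂ) ^ (n-1)) • b i := fun i =>
    Module.End.HasEigenvector.pow_apply ⟨hint.collectedBasis_mem bB i, b.ne_zero i⟩ (n-1)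
  have hconj : ∀ i : (Σ μ : S, Module.Free.ChooseBasisIndex ℂ (f.eigenspace μ.1)),
      ((i.1.1 : ℂ)) ^ (n-1) = starRingEnd ℂ (i.1.1 : ℂ) := by
    intro i
    have h1 : ((i.1.1 : ℂ)) ^ n = 1 := (Polynomial.mem_nthRootsFinset hn (1 : ℂ)).mp i.1.2
    have habs : ‖(i.1.1 : ℂ)‖ = 1 := by
      have h2 : ‖(i.1.1 : ℂ)‖ ^ n = 1 := by
        rw [← norm_pow, h1, norm_one]
      rcases pow_eq_one_iff_cases.mp h2 with h | h | h
      · omega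
      · exact h
      · exfalso
        have := norm_nonneg (i.1.1 : ℂ)
        rw [h.1] at this; linarith
    have hinv : (i.1.1 : ℂ)⁻¹ = starRingEnd ℂ (i.1.1 : ℂ) := Complex.inv_eq_conj habs
    rw [← hinv]
    have hne : (i.1.1 : ℂ) ≠ 0 := by
      intro h
      rw [h, zero_pow hn.ne'] at h1
      exact zero_ne_one h1
    field_simp
    rw [← pow_succ, Nat.sub_add_cancel hn, h1]
  rw [LinearMap.trace_eq_matrix_trace ℂ b f, LinearMap.trace_eq_matrix_trace ℂ b (f ^ (n-1)),
    Matrix.trace, Matrix.trace, map_sum]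
  apply Finset.sum_congr rfl
  intro i _
  have hdiag : ∀ (g : Module.End ℂ V) (c : ℂ), g (b i) = c • b i →
      Matrix.diag (LinearMap.toMatrix b b g) i = c := by
    intro g c hg
    rw [Matrix.diag_apply, LinearMap.toMatrix_apply, hg, map_smul]
    simp [Basis.repr_self_apply]
  rw [hdiag _ _ (hbpow i), hdiag _ _ (hb i), hconj i]

/-- Complex characters of finite groups satisfy `χ(g⁻¹) = conj (χ g)`. -/
lemma charConjAux {H : Type} [Group H] [Fintype H] (V : FDRep ℂ H) (g : H) :
    V.character g⁻¹ = starRingEnd ℂ (V.character g) := by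
  have hn : 0 < Fintype.card H := Fintype.card_pos
  have hpow : (V.ρ g) ^ Fintype.card H = 1 := by
    rw [← map_pow, pow_card_eq_one, map_one]
  have hinv : V.ρ g⁻¹ = (V.ρ g) ^ (Fintype.card H - 1) := by
    have h1 : V.ρ g⁻¹ * V.ρ g = 1 := by rw [← map_mul, inv_mul_cancel, map_one]
    have h2 : V.ρ g⁻¹ = V.ρ g⁻¹ * ((V.ρ g) * (V.ρ g) ^ (Fintype.card H - 1)) := by
      rw [← pow_succ', Nat.sub_add_cancel hn, hpow, mul_one]
    rw [h2, ← mul_assoc, h1, one_mul]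
  show LinearMap.trace ℂ V (V.ρ g⁻¹) = starRingEnd ℂ (LinearMap.trace ℂ V (V.ρ g))
  rw [hinv]
  exact traceConjAux (V.ρ g) _ hn hpow

/-- The key noncommutative-ring computation. -/
lemma keyCalc {R : Type} [Ring R] [Algebra ℂ R] (P P' Q Q' Bc Bc' Bh Bh' : R) (z : ℂ)
    (hPP' : P * P' = 1) (hQQ' : Q * Q' = 1)
    (hR1 : P' * Q' * P * Q * (Bh' * Bc' * Bh * Bc) = z • 1)
    (hR2 : Q' * Bc' * Q = Bh' * Bc' * Bh) :
    P * Bc' * (Q * (Bc * P')) = z • Q := by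
  have cPP' : ∀ X : R, P * (P' * X) = X := fun X => by rw [← mul_assoc, hPP', one_mul]
  have cQQ' : ∀ X : R, Q * (Q' * X) = X := fun X => by rw [← mul_assoc, hQQ', one_mul]
  have hQB1 : Q * (Bh' * (Bc' * (Bh * Bc))) = Bc' * (Q * Bc) := by
    have h1 : Bh' * (Bc' * (Bh * Bc)) = Q' * Bc' * Q * Bc := by
      simp only [← mul_assoc]
      rw [hR2]
    rw [h1]
    simp only [mul_assoc]
    rw [cQQ']
  have e1 : P * (Bc' * (Q * Bc)) = z • (Q * P) := by
    have h2 : Q * (P * (P' * Q' * P * Q * (Bh' * Bc' * Bh * Bc))) = Q * (P * (z • (1:R))) := by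
      rw [hR1]
    have hRHS : Q * (P * (z • (1:R))) = z • (Q * P) := by
      rw [mul_smul_comm, mul_one, mul_smul_comm]
    rw [hRHS] at h2
    simp only [mul_assoc] at h2
    rw [cPP', cQQ'] at h2
    rw [← h2]
    rw [hQB1]
  have e2 : P * (Bc' * (Q * Bc)) * P' = (z • (Q * P)) * P' := by rw [e1]
  calc P * Bc' * (Q * (Bc * P')) = P * (Bc' * (Q * Bc)) * P' := by simp only [mul_assoc]
    _ = (z • (Q * P)) * P' := e2
    _ = z • (Q * (P * P')) := by rw [smul_mul_assoc]; simp only [mul_assoc]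
    _ = z • Q := by rw [hPP', mul_one]

lemma keyCalc2 {R : Type} [Ring R] (P P' Q Bc Bc' : R)
    (hP'P : P' * P = 1) (hBcBc' : Bc * Bc' = 1) :
    (Q * (Bc * P')) * (P * Bc') = Q := by
  calc (Q * (Bc * P')) * (P * Bc') = Q * (Bc * (P' * (P * Bc'))) := by simp only [mul_assoc]
    _ = Q * (Bc * Bc') := by rw [← mul_assoc P' P, hP'P, one_mul]
    _ = Q := by rw [hBcBc', mul_one]

end Aux


open CF

/-- `g` is `φ`-good in `G`: `⟨c,g⟩_φ = 1` whenever `Lc` centralizes `Lg` in `G/L`. -/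
def GoodElt {G : Type} [Group G] [Fintype G] (L : Subgroup G) (φ : ↥L → ℂ) (g : G) : Prop :=
  ∀ c : G, c⁻¹ * g⁻¹ * c * g ∈ L → ∀ z : ℂ, DadeScalar L φ c g z → z = 1

section MainAux

variable {G : Type} [Group G] [Fintype G]

/-- Conjugation by `g` as an equivalence of a normal subgroup. -/
def conjEquiv (L : Subgroup G) [hN : L.Normal] (g : G) : ↥L ≃ ↥L where
  toFun l := ⟨g * l * g⁻¹, hN.conj_mem l l.2 g⟩
  invFun l := ⟨g⁻¹ * l * g, by simpa [mul_assoc] using hN.conj_mem l l.2 g⁻¹⟩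
  left_inv l := by ext; show g⁻¹ * (g * ↑l * g⁻¹) * g = ↑l; group
  right_inv l := by ext; show g * (g⁻¹ * ↑l * g) * g⁻¹ = ↑l; group

lemma eIdem_comm {L : Subgroup G} [hN : L.Normal] {φ : ↥L → ℂ}
    (hφinv : Invariant L φ) (g : G) : ι g * eIdem L φ = eIdem L φ * ι g := by
  unfold ι eIdem
  rw [mul_smul_comm, smul_mul_assoc]
  congr 1
  rw [Finset.mul_sum, Finset.sum_mul]
  refine Fintype.sum_equiv (conjEquiv L g) _ _ ?_
  intro l
  rw [MonoidAlgebra.single_mul_single, MonoidAlgebra.single_mul_single, one_mul, mul_one]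
  have hval : ((conjEquiv L g l : G)) * g = g * (l : G) := by
    simp only [conjEquiv, Equiv.coe_fn_mk]
    group
  have hphi : φ ((conjEquiv L g l)⁻¹) = φ l⁻¹ := by
    have h := hφinv g⁻¹ l⁻¹
    rw [← h]
    congr 1
    ext
    simp only [InvMemClass.coe_inv, conjEquiv, Equiv.coe_fn_mk, Subgroup.coe_mk]
    group
  rw [hval, hphi]

end MainAux

/-- Lemma 2.3 of Ladisch.  If `χ` is a complex linear combination of
irreducible characters of `G` lying over `φ` and `χ(h) ≠ 0`, then `h` is `φ`-good. -/
theorem stmt2 {G : Type} [Group G] [Fintype G] (L : Subgroup G) [L.Normal]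
    (φ : ↥L → ℂ) (hφirr : IsIrrChar ↥L φ) (hφinv : Invariant L φ)
    (χ : G → ℂ)
    (hχ : χ ∈ Submodule.span ℂ
      {ξ : G → ℂ | IsIrrChar G ξ ∧ innerChar ↥L (fun l => ξ (l : G)) φ ≠ 0})
    (h : G) (hne : χ h ≠ 0) :
    GoodElt L φ h := by
  intro c _ z hz
  -- find an irreducible character over φ not vanishing at h
  have hex : ∃ ξ : G → ℂ,
      (IsIrrChar G ξ ∧ innerChar ↥L (fun l => ξ (l : G)) φ ≠ 0) ∧ ξ h ≠ 0 := by
    by_contra hall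
    push_neg at hall
    apply hne
    have hle : Submodule.span ℂ
        {ξ : G → ℂ | IsIrrChar G ξ ∧ innerChar ↥L (fun l => ξ (l : G)) φ ≠ 0} ≤
        LinearMap.ker (LinearMap.proj (R := ℂ) (φ := fun _ : G => ℂ) h) := by
      rw [Submodule.span_le]
      intro ξ hmem
      exact LinearMap.mem_ker.mpr (hall ξ hmem)
    exact hle hχ
  obtain ⟨ξ, ⟨⟨V, hVs, rfl⟩, hξover⟩, hξh⟩ := hex
  obtain ⟨W, hWs, hφchar⟩ := hφirr
  obtain ⟨cc, cc', ch, ch', hIc, hIh, hDade⟩ := hz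
  -- the algebra map
  set π := Representation.asAlgebraHom V.ρ with hπdef
  have hπι : ∀ g : G, π (ι g) = V.ρ g := fun g =>
    Representation.asAlgebraHom_single_one V.ρ g
  have hsingle : ∀ (l : ↥L) (r : ℂ), π (MonoidAlgebra.single (l : G) r) = r • V.ρ (l : G) :=
    fun l r => Representation.asAlgebraHom_single V.ρ _ _
  -- conjugate of φ
  have hconjφ : ∀ l : ↥L, starRingEnd ℂ (φ l) = φ l⁻¹ := by
    intro l
    rw [hφchar]
    exact (charConjAux W l).symm
  -- the sum over L is nonzero
  have hsum : ∑ l : ↥L, V.character (l : G) * φ l⁻¹ ≠ 0 := by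
    intro h0
    apply hξover
    unfold innerChar
    rw [mul_eq_zero]
    right
    rw [← h0]
    exact Finset.sum_congr rfl fun l _ => by rw [hconjφ]
  -- φ 1 ≠ 0
  have hφ1 : φ 1 ≠ 0 := by
    intro h0
    apply hsum
    have hzero : ∀ l : ↥L, φ l = 0 := by
      intro l
      have h1 : φ 1 = (Module.finrank ℂ W : ℂ) := by rw [hφchar]; exact FDRep.char_one W
      have hfr : Module.finrank ℂ W = 0 := by
        rw [h0] at h1
        exact_mod_cast h1.symm
      haveI hsub : Subsingleton W := Module.finrank_zero_iff.mp hfr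
      rw [hφchar]
      show LinearMap.trace ℂ W (W.ρ l) = 0
      have hρ0 : W.ρ l = 0 := by
        ext x
        exact Subsingleton.elim _ _
      rw [hρ0, map_zero]
    simp [hzero]
  -- trace of π (eIdem L φ)
  have htr : LinearMap.trace ℂ V (π (eIdem L φ)) =
      (φ 1 / (Fintype.card ↥L : ℂ)) * ∑ l : ↥L, φ l⁻¹ * V.character (l : G) := by
    unfold eIdem
    rw [map_smul, map_sum, map_smul, map_sum, smul_eq_mul]
    congr 1
    refine Finset.sum_congr rfl fun l _ => ?_
    rw [hsingle, map_smul, smul_eq_mul]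
    rfl
  have htrne : LinearMap.trace ℂ V (π (eIdem L φ)) ≠ 0 := by
    rw [htr]
    refine mul_ne_zero (div_ne_zero hφ1 (Nat.cast_ne_zero.mpr Fintype.card_ne_zero)) ?_
    intro h0
    apply hsum
    rw [← h0]
    exact Finset.sum_congr rfl fun l _ => mul_comm _ _
  -- Schur: π (eIdem L φ) is scalar
  have hcomm : ∀ g : G, (π (eIdem L φ)) ∘ₗ V.ρ g = V.ρ g ∘ₗ π (eIdem L φ) := by
    intro g
    have h1 := congrArg π (eIdem_comm hφinv g)
    rw [map_mul, map_mul, hπι] at h1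
    rw [← Module.End.mul_eq_comp, ← Module.End.mul_eq_comp]
    exact h1.symm
  obtain ⟨μ, hμ⟩ := schurScalar V hVs (π (eIdem L φ)) hcomm
  -- μ = 1, i.e. π (eIdem L φ) = 1
  have hπe : π (eIdem L φ) = 1 := by
    have hBcne : π cc ≠ 0 := by
      intro h0
      apply htrne
      rw [← hIc.2.2.2.2.1, map_mul, h0, zero_mul, map_zero]
    have hEBc : π (eIdem L φ) * π cc = π cc := by
      rw [← map_mul, hIc.2.2.1.2]
    rw [hμ] at hEBc
    have hsm : μ • π cc = π cc := by
      calc μ • π cc = μ • LinearMap.id * π cc := by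
            rw [smul_mul_assoc, Module.End.mul_eq_comp, LinearMap.id_comp]
        _ = π cc := hEBc
    have hμ1 : μ = 1 := by
      have h2 : (μ - 1) • π cc = 0 := by
        rw [sub_smul, one_smul, hsm, sub_self]
      rcases smul_eq_zero.mp h2 with h3 | h3
      · exact sub_eq_zero.mp h3
      · exact absurd h3 hBcne
    rw [hμ, hμ1, one_smul]
    rfl
  -- basic inverses
  have hPP' : V.ρ c * V.ρ c⁻¹ = 1 := by rw [← map_mul, mul_inv_cancel, map_one]
  have hP'P : V.ρ c⁻¹ * V.ρ c = 1 := by rw [← map_mul, inv_mul_cancel, map_one]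
  have hQQ' : V.ρ h * V.ρ h⁻¹ = 1 := by rw [← map_mul, mul_inv_cancel, map_one]
  have hBcBc' : π cc * π cc' = 1 := by rw [← map_mul, hIc.2.2.2.2.1, hπe]
  -- relation R1 from the Dade equation
  have hι4 : ι (c⁻¹ * h⁻¹ * c * h) = ι c⁻¹ * ι h⁻¹ * ι c * ι h := by
    simp [ι, MonoidAlgebra.single_mul_single]
  have hR1 : V.ρ c⁻¹ * V.ρ h⁻¹ * V.ρ c * V.ρ h * (π ch' * π cc' * π ch * π cc) = z • 1 := by
    have h1 := congrArg π hDade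
    rw [map_mul, map_smul, hπe, hι4, map_mul, map_mul, map_mul, hπι, hπι, hπι, hπι,
      map_mul, map_mul, map_mul] at h1
    exact h1
  -- relation R2 from the inducing property of h applied to cc'
  have hR2 : V.ρ h⁻¹ * π cc' * V.ρ h = π ch' * π cc' * π ch := by
    have h1 := congrArg π (hIh.2.2.2.2.2.2 cc' hIc.2.1 hIc.2.2.2.1)
    rw [map_mul, map_mul, hπι, hπι, map_mul, map_mul] at h1
    exact h1
  -- the key identity
  have hkey : V.ρ c * π cc' * (V.ρ h * (π cc * V.ρ c⁻¹)) = z • V.ρ h :=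
    keyCalc (V.ρ c) (V.ρ c⁻¹) (V.ρ h) (V.ρ h⁻¹) (π cc) (π cc') (π ch) (π ch') z
      hPP' hQQ' hR1 hR2
  have hkey2 : (V.ρ h * (π cc * V.ρ c⁻¹)) * (V.ρ c * π cc') = V.ρ h :=
    keyCalc2 (V.ρ c) (V.ρ c⁻¹) (V.ρ h) (π cc) (π cc') hP'P hBcBc'
  -- take traces
  have ht1 : LinearMap.trace ℂ V (V.ρ c * π cc' * (V.ρ h * (π cc * V.ρ c⁻¹))) =
      LinearMap.trace ℂ V (V.ρ h) := by
    rw [LinearMap.trace_mul_comm, hkey2]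
  have ht2 : z * V.character h = V.character h := by
    have h1 : LinearMap.trace ℂ V (z • V.ρ h) = z * LinearMap.trace ℂ V (V.ρ h) := by
      rw [map_smul, smul_eq_mul]
    calc z * V.character h = LinearMap.trace ℂ V (z • V.ρ h) := h1.symm
      _ = LinearMap.trace ℂ V (V.ρ c * π cc' * (V.ρ h * (π cc * V.ρ c⁻¹))) := by rw [hkey]
      _ = V.character h := ht1
  have := mul_right_cancel₀ hξh (ht2.trans (one_mul (V.character h)).symm)
  exact this
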